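/- arXiv:1608.04819 — 4 statements merged into one kernel-verified Lean document; each statement's English description precedes it below -/
import Mathlib

section
/- Let f : ℤ → ℝ be the step signal f_j = α for j ≤ i and f_j = β for j > i, where α ≠ β. Then for 0 ≤ ℓ < k, the k-th order finite difference at index m = i - ℓ equals (α - β)·C(k-1, ℓ)·(-1)^{k-ℓ}. -/
lemma partial_alt_sum (m : ℕ) : ∀ ℓ : ℕ,
    ∑ j ∈ Finset.range (ℓ + 1), (-1 : ℝ) ^ j * ((m + 1).choose j : ℝ)
      = (-1 : ℝ) ^ ℓ * (m.choose ℓ : ℝ) := by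
  intro ℓ
  induction ℓ with
  | zero => simp
  | succ n ih =>
    rw [Finset.sum_range_succ, ih, Nat.choose_succ_succ m n]
    push_cast
    ring

theorem step_signal_finite_diff_value (k : ℕ) (hk : 0 < k) (i : ℤ) (α β : ℝ)
    (hαβ : α ≠ β) (f : ℤ → ℝ)
    (hle : ∀ j : ℤ, j ≤ i → f j = α) (hgt : ∀ j : ℤ, i < j → f j = β)
    (ℓ : ℕ) (hℓ : ℓ < k) :
    ∑ j ∈ Finset.range (k + 1), (-1 : ℝ) ^ (j + k) * (k.choose j : ℝ) * f (i - ℓ + j) =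
      (α - β) * ((k - 1).choose ℓ : ℝ) * (-1 : ℝ) ^ (k - ℓ) := by
  obtain ⟨m, rfl⟩ : ∃ m, k = m + 1 := ⟨k - 1, (Nat.succ_pred_eq_of_pos hk).symm⟩
  have hlk : ℓ + 1 ≤ m + 1 + 1 := by omega
  rw [Finset.range_eq_Ico, ← Finset.sum_Ico_consecutive _ (Nat.zero_le (ℓ + 1)) hlk]
  have hp0 : ∑ j ∈ Finset.Ico 0 (ℓ + 1), (-1 : ℝ) ^ j * ((m + 1).choose j : ℝ)
      = (-1 : ℝ) ^ ℓ * (m.choose ℓ : ℝ) := by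
    rw [← Finset.range_eq_Ico]; exact partial_alt_sum m ℓ
  have htot : ∑ j ∈ Finset.Ico 0 (m + 1 + 1), (-1 : ℝ) ^ j * ((m + 1).choose j : ℝ) = 0 := by
    rw [← Finset.range_eq_Ico]
    simpa [Nat.choose_succ_self] using partial_alt_sum m (m + 1)
  have hIco : ∑ j ∈ Finset.Ico (ℓ + 1) (m + 1 + 1), (-1 : ℝ) ^ j * ((m + 1).choose j : ℝ)
      = 0 - (-1 : ℝ) ^ ℓ * (m.choose ℓ : ℝ) := by
    have hsplit := Finset.sum_Ico_consecutive
      (fun j => (-1 : ℝ) ^ j * ((m + 1).choose j : ℝ)) (Nat.zero_le (ℓ + 1)) hlk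
    linarith
  have h1 : ∑ j ∈ Finset.Ico 0 (ℓ + 1),
        (-1 : ℝ) ^ (j + (m + 1)) * ((m + 1).choose j : ℝ) * f (i - ℓ + j)
      = (-1 : ℝ) ^ (m + 1) * α * ((-1 : ℝ) ^ ℓ * (m.choose ℓ : ℝ)) := by
    rw [← hp0, Finset.mul_sum]
    refine Finset.sum_congr rfl fun j hj => ?_
    rw [Finset.mem_Ico] at hj
    rw [hle _ (by omega), pow_add]
    ring
  have h2 : ∑ j ∈ Finset.Ico (ℓ + 1) (m + 1 + 1),
        (-1 : ℝ) ^ (j + (m + 1)) * ((m + 1).choose j : ℝ) * f (i - ℓ + j)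
      = (-1 : ℝ) ^ (m + 1) * β * (0 - (-1 : ℝ) ^ ℓ * (m.choose ℓ : ℝ)) := by
    rw [← hIco, Finset.mul_sum]
    refine Finset.sum_congr rfl fun j hj => ?_
    rw [Finset.mem_Ico] at hj
    rw [hgt _ (by omega), pow_add]
    ring
  rw [h1, h2]
  have hpow : (-1 : ℝ) ^ (m + 1 + ℓ) = (-1 : ℝ) ^ (m + 1 - ℓ) := by
    obtain ⟨d, hd⟩ : ∃ d, m + 1 = ℓ + d := ⟨m + 1 - ℓ, by omega⟩
    rw [show m + 1 - ℓ = d by omega, hd, show ℓ + d + ℓ = d + 2 * ℓ by ring,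
      pow_add, pow_mul]
    simp
  rw [show m + 1 - 1 = m from rfl, ← hpow, pow_add]
  ring
end

section
/- Let f : ℤ → ℝ be the step signal f_j = α for j ≤ i and f_j = β for j > i, with α ≠ β. Then the total ℓ¹ norm of the k-th order finite difference over all indices equals 2^{k-1}|α - β|; that is, ∑_{m ∈ ℤ} |(T_k f)_m| = 2^{k-1}|α - β|. -/
open Finset

private lemma alt_sum_zero (k : ℕ) (hk : 0 < k) :
    ∑ j ∈ range (k + 1), (-1 : ℝ) ^ j * (k.choose j : ℝ) = 0 := by
  have h := Int.alternating_sum_range_choose_of_ne (n := k) hk.ne'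
  have := congrArg (fun z : ℤ => (z : ℝ)) h
  push_cast at this
  simpa using this

private lemma alt_partial (n t : ℕ) :
    ∑ j ∈ range (t + 1), (-1 : ℝ) ^ j * ((n + 1).choose j : ℝ)
      = (-1) ^ t * (n.choose t : ℝ) := by
  induction t with
  | zero => simp
  | succ t ih =>
    rw [sum_range_succ, ih, Nat.choose_succ_succ]
    push_cast
    ring

theorem step_signal_finite_diff_l1 (k : ℕ) (hk : 0 < k) (i : ℤ) (α β : ℝ)
    (hαβ : α ≠ β) (f : ℤ → ℝ)
    (hle : ∀ j : ℤ, j ≤ i → f j = α) (hgt : ∀ j : ℤ, i < j → f j = β) :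
    ∑ᶠ m : ℤ,
        |∑ j ∈ Finset.range (k + 1), (-1 : ℝ) ^ (j + k) * (k.choose j : ℝ) * f (m + j)|
      = 2 ^ (k - 1) * |α - β| := by
  obtain ⟨n, rfl⟩ : ∃ n, k = n + 1 := ⟨k - 1, (Nat.succ_pred_eq_of_pos hk).symm⟩
  set k := n + 1 with hkdef
  set g : ℤ → ℝ := fun m =>
    |∑ j ∈ Finset.range (k + 1), (-1 : ℝ) ^ (j + k) * (k.choose j : ℝ) * f (m + j)| with hg
  -- value of the inner sum at m = i - t for t < k
  have hval : ∀ t : ℕ, t < k →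
      ∑ j ∈ Finset.range (k + 1), (-1 : ℝ) ^ (j + k) * (k.choose j : ℝ) * f ((i - t) + j)
        = (-1) ^ k * (α - β) * ((-1) ^ t * (n.choose t : ℝ)) := by
    intro t ht
    have hstep : ∀ j ∈ range (k + 1),
        (-1 : ℝ) ^ (j + k) * (k.choose j : ℝ) * f ((i - t) + j)
          = (-1) ^ k * (((-1) ^ j * (k.choose j : ℝ)) * (if j ≤ t then α - β else 0))
            + (-1) ^ k * ((-1) ^ j * (k.choose j : ℝ)) * β := by
      intro j _
      by_cases hj : j ≤ t
      · have : f ((i - t) + j) = α := hle _ (by omega)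
        rw [this, if_pos hj, pow_add]; ring
      · have : f ((i - t) + j) = β := hgt _ (by push_neg at hj; omega)
        rw [this, if_neg hj, pow_add]; ring
    rw [Finset.sum_congr rfl hstep, Finset.sum_add_distrib]
    have h2 : ∑ j ∈ range (k + 1), (-1 : ℝ) ^ k * ((-1) ^ j * (k.choose j : ℝ)) * β
        = 0 := by
      rw [← Finset.sum_mul, ← Finset.mul_sum, alt_sum_zero k hk]; ring
    have h1 : ∑ j ∈ range (k + 1),
        (-1 : ℝ) ^ k * (((-1) ^ j * (k.choose j : ℝ)) * (if j ≤ t then α - β else 0))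
          = (-1) ^ k * (α - β) * ((-1) ^ t * (n.choose t : ℝ)) := by
      rw [← Finset.mul_sum]
      have hsub : ∑ j ∈ range (k + 1),
          ((-1 : ℝ) ^ j * (k.choose j : ℝ)) * (if j ≤ t then α - β else 0)
            = ∑ j ∈ range (t + 1), ((-1 : ℝ) ^ j * (k.choose j : ℝ)) * (α - β) := by
        rw [← Finset.sum_subset (Finset.range_subset_range.2 (by omega) :
            range (t + 1) ⊆ range (k + 1))]
        · exact Finset.sum_congr rfl fun j hj => by
            rw [if_pos (by simpa using Nat.lt_succ_iff.mp (Finset.mem_range.mp hj))]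
        · intro j _ hj
          rw [if_neg (fun h => hj (Finset.mem_range.mpr (by omega)))]
          ring
      rw [hsub, ← Finset.sum_mul, alt_partial n t]
      ring
    rw [h1, h2, add_zero]
  -- support of g
  have hsupp : Function.support g ⊆ ((range k).image (fun t : ℕ => i - (t : ℤ)) : Finset ℤ) := by
    intro m hm
    simp only [Function.mem_support] at hm
    by_contra hmem
    apply hm
    have hrange : ¬ (i - k < m ∧ m ≤ i) := by
      intro ⟨h1, h2⟩
      apply hmem
      simp only [Finset.coe_image, Set.mem_image, Finset.mem_coe, Finset.mem_range]
      exact ⟨(i - m).toNat, by omega, by omega⟩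
    have hz : ∑ j ∈ Finset.range (k + 1), (-1 : ℝ) ^ (j + k) * (k.choose j : ℝ) * f (m + j) = 0 := by
      by_cases hcase : i < m
      · have : ∀ j ∈ range (k + 1), (-1 : ℝ) ^ (j + k) * (k.choose j : ℝ) * f (m + j)
            = (-1) ^ k * ((-1) ^ j * (k.choose j : ℝ)) * β := by
          intro j _
          rw [hgt _ (by omega), pow_add]; ring
        rw [Finset.sum_congr rfl this, ← Finset.sum_mul, ← Finset.mul_sum, alt_sum_zero k hk]
        ring
      · have hm' : m ≤ i - k := by omega
        have : ∀ j ∈ range (k + 1), (-1 : ℝ) ^ (j + k) * (k.choose j : ℝ) * f (m + j)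
            = (-1) ^ k * ((-1) ^ j * (k.choose j : ℝ)) * α := by
          intro j hj
          rw [hle _ (by have := Finset.mem_range.mp hj; omega), pow_add]; ring
        rw [Finset.sum_congr rfl this, ← Finset.sum_mul, ← Finset.mul_sum, alt_sum_zero k hk]
        ring
    simp [hg, hz]
  rw [finsum_eq_sum_of_support_subset g hsupp,
    Finset.sum_image (by intro a _ b _ h; have h' : i - (a : ℤ) = i - (b : ℤ) := h; omega)]
  have : ∀ t ∈ range k, g (i - (t : ℤ)) = |α - β| * (n.choose t : ℝ) := by
    intro t ht
    rw [hg]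
    simp only
    rw [hval t (Finset.mem_range.mp ht)]
    simp [abs_mul, Nat.abs_cast]
  rw [Finset.sum_congr rfl this, ← Finset.mul_sum]
  have : ∑ t ∈ range k, (n.choose t : ℝ) = 2 ^ n := by
    have := Nat.sum_range_choose n
    have h2 := congrArg (fun z : ℕ => (z : ℝ)) this
    push_cast at h2
    simpa [hkdef] using h2
  rw [this]
  simp [hkdef, mul_comm]
end

section
/- Let f : ℤ → ℝ be piecewise constant with jump set S = { j : f_{j+1} ≠ f_j } finite, and suppose any two distinct jump indices j₁, j₂ ∈ S satisfy |j₁ - j₂| > k. Then ∑_m |(T_k f)_m| = 2^{k-1} ∑_m |(T_1 f)_m|, i.e., the k-th order finite-difference ℓ¹ seminorm equals 2^{k-1} times the total variation seminorm of f. -/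
open Finset

private lemma constRun (f : ℤ → ℝ) (a : ℤ) (n : ℕ)
    (h : ∀ r : ℕ, r < n → f (a + r + 1) = f (a + r)) :
    ∀ j : ℕ, j ≤ n → f (a + j) = f a := by
  intro j hj
  induction j with
  | zero => simp
  | succ i ih =>
    have h1 : f (a + i + 1) = f (a + i) := h i (by omega)
    have h2 := ih (by omega)
    have e : a + ((i : ℤ) + 1) = a + i + 1 := by ring
    push_cast
    rw [e, h1, h2]

private lemma altPartial (n : ℕ) : ∀ t : ℕ, t ≤ n →
    ∑ j ∈ range (t + 1), (-1 : ℝ) ^ j * ((n + 1).choose j : ℝ)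
      = (-1) ^ t * (n.choose t : ℝ) := by
  intro t
  induction t with
  | zero => intro _; simp
  | succ i ih =>
    intro hi
    rw [Finset.sum_range_succ, ih (by omega), Nat.choose_succ_succ]
    push_cast
    ring

private lemma signSumZero (k : ℕ) (hk : 0 < k) :
    ∑ j ∈ range (k + 1), (-1 : ℝ) ^ (j + k) * (k.choose j : ℝ) = 0 := by
  have h := Int.alternating_sum_range_choose (n := k)
  rw [if_neg (by omega)] at h
  have h' : ∑ j ∈ range (k + 1), (-1 : ℝ) ^ j * (k.choose j : ℝ) = 0 := by
    exact_mod_cast congrArg (fun z : ℤ => (z : ℝ)) h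
  calc ∑ j ∈ range (k + 1), (-1 : ℝ) ^ (j + k) * (k.choose j : ℝ)
      = (-1) ^ k * ∑ j ∈ range (k + 1), (-1 : ℝ) ^ j * (k.choose j : ℝ) := by
        rw [Finset.mul_sum]; apply Finset.sum_congr rfl; intro j _; rw [pow_add]; ring
    _ = 0 := by rw [h', mul_zero]

private lemma window_val (k : ℕ) (hk : 0 < k) (f : ℤ → ℝ)
    (s : ℤ) (t : ℕ) (ht : t < k)
    (hconst1 : ∀ j : ℕ, j ≤ t → f (s - t + j) = f (s - t))
    (hconst2 : ∀ j : ℕ, t < j → j ≤ k → f (s - t + j) = f (s + 1)) :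
    |∑ j ∈ range (k + 1), (-1 : ℝ) ^ (j + k) * (k.choose j : ℝ) * f (s - t + j)|
      = ((k - 1).choose t : ℝ) * |f (s + 1) - f s| := by
  set A : ℝ := ∑ j ∈ range (t + 1), (-1 : ℝ) ^ (j + k) * (k.choose j : ℝ) with hA
  have hfs : f s = f (s - t) := by
    have := hconst1 t le_rfl
    rw [show s - (t : ℤ) + (t : ℤ) = s by ring] at this
    exact this
  have hsplit : ∑ j ∈ range (k + 1), (-1 : ℝ) ^ (j + k) * (k.choose j : ℝ) * f (s - t + j)
      = A * f (s - t) + (-A) * f (s + 1) := by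
    rw [← Finset.sum_range_add_sum_Ico _ (by omega : t + 1 ≤ k + 1)]
    have e1 : ∑ j ∈ range (t + 1), (-1 : ℝ) ^ (j + k) * (k.choose j : ℝ) * f (s - t + j)
        = A * f (s - t) := by
      rw [hA, Finset.sum_mul]
      apply Finset.sum_congr rfl
      intro j hj
      rw [hconst1 j (by simp at hj; omega)]
    have e2 : ∑ j ∈ Ico (t + 1) (k + 1), (-1 : ℝ) ^ (j + k) * (k.choose j : ℝ) * f (s - t + j)
        = (-A) * f (s + 1) := by
      have hB : ∑ j ∈ Ico (t + 1) (k + 1), (-1 : ℝ) ^ (j + k) * (k.choose j : ℝ) = -A := by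
        have := signSumZero k hk
        rw [← Finset.sum_range_add_sum_Ico _ (by omega : t + 1 ≤ k + 1), ← hA] at this
        linarith
      rw [← hB, Finset.sum_mul]
      apply Finset.sum_congr rfl
      intro j hj
      simp only [Finset.mem_Ico] at hj
      rw [hconst2 j (by omega) (by omega)]
    rw [e1, e2]
  have hAval : A = (-1 : ℝ) ^ (k + t) * ((k - 1).choose t : ℝ) := by
    have h1 : ∑ j ∈ range (t + 1), (-1 : ℝ) ^ j * (((k - 1) + 1).choose j : ℝ)
        = (-1) ^ t * ((k - 1).choose t : ℝ) := altPartial (k - 1) t (by omega)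
    rw [show k - 1 + 1 = k by omega] at h1
    rw [hA]
    calc ∑ j ∈ range (t + 1), (-1 : ℝ) ^ (j + k) * (k.choose j : ℝ)
        = (-1) ^ k * ∑ j ∈ range (t + 1), (-1 : ℝ) ^ j * (k.choose j : ℝ) := by
          rw [Finset.mul_sum]; apply Finset.sum_congr rfl; intro j _; rw [pow_add]; ring
      _ = (-1) ^ k * ((-1) ^ t * ((k - 1).choose t : ℝ)) := by rw [h1]
      _ = (-1 : ℝ) ^ (k + t) * ((k - 1).choose t : ℝ) := by rw [pow_add]; ring
  rw [hsplit]
  have e : A * f (s - t) + (-A) * f (s + 1) = A * (f s - f (s + 1)) := by rw [hfs]; ring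
  rw [e, abs_mul, hAval, abs_mul, abs_pow, abs_neg, abs_one, one_pow, one_mul,
    Nat.abs_cast, abs_sub_comm]

theorem piecewise_constant_HOTV_eq_TV (k : ℕ) (hk : 0 < k) (f : ℤ → ℝ)
    (hS : {j : ℤ | f (j + 1) ≠ f j}.Finite)
    (hsep : ∀ j₁ ∈ {j : ℤ | f (j + 1) ≠ f j}, ∀ j₂ ∈ {j : ℤ | f (j + 1) ≠ f j},
      j₁ ≠ j₂ → (k : ℤ) < |j₁ - j₂|) :
    ∑ᶠ m : ℤ,
        |∑ j ∈ Finset.range (k + 1), (-1 : ℝ) ^ (j + k) * (k.choose j : ℝ) * f (m + j)|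
      = 2 ^ (k - 1) * ∑ᶠ m : ℤ, |f (m + 1) - f m| := by
  classical
  set S : Finset ℤ := hS.toFinset with hSdef
  have hmem : ∀ j : ℤ, j ∈ S ↔ f (j + 1) ≠ f j := by
    intro j; rw [hSdef, Set.Finite.mem_toFinset]; rfl
  set T : ℤ → ℝ := fun m =>
    |∑ j ∈ range (k + 1), (-1 : ℝ) ^ (j + k) * (k.choose j : ℝ) * f (m + j)| with hT
  -- windows
  set W : Finset ℤ := S.biUnion (fun s => (range k).image (fun t : ℕ => s - (t : ℤ))) with hW
  -- T vanishes off W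
  have hzero : ∀ m : ℤ, m ∉ W → T m = 0 := by
    intro m hm
    have hnoj : ∀ r : ℕ, r < k → f (m + r + 1) = f (m + r) := by
      intro r hr
      by_contra hne
      have hmem' : m + r ∈ S := (hmem _).2 hne
      apply hm
      rw [hW, Finset.mem_biUnion]
      exact ⟨m + r, hmem', Finset.mem_image.2 ⟨r, Finset.mem_range.2 hr, by ring⟩⟩
    have hc := constRun f m k hnoj
    have : ∑ j ∈ range (k + 1), (-1 : ℝ) ^ (j + k) * (k.choose j : ℝ) * f (m + j)
        = (∑ j ∈ range (k + 1), (-1 : ℝ) ^ (j + k) * (k.choose j : ℝ)) * f m := by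
      rw [Finset.sum_mul]
      apply Finset.sum_congr rfl
      intro j hj
      rw [hc j (by simp at hj; omega)]
    rw [hT]
    simp only
    rw [this, signSumZero k hk, zero_mul, abs_zero]
  -- LHS as a finite sum over W
  have hLHS : ∑ᶠ m : ℤ, T m = ∑ m ∈ W, T m := by
    apply finsum_eq_finset_sum_of_support_subset
    intro m hm
    simp only [Function.mem_support] at hm
    by_contra hmW
    exact hm (hzero m hmW)
  -- windows are pairwise disjoint
  have hdisj : (S : Set ℤ).PairwiseDisjoint
      (fun s => (range k).image (fun t : ℕ => s - (t : ℤ))) := by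
    intro s₁ hs₁ s₂ hs₂ hne
    simp only [Finset.disjoint_left]
    intro x hx1 hx2
    simp only [Finset.mem_image, Finset.mem_range] at hx1 hx2
    obtain ⟨t₁, ht₁, rfl⟩ := hx1
    obtain ⟨t₂, ht₂, he⟩ := hx2
    have hs₁' : f (s₁ + 1) ≠ f s₁ := (hmem s₁).1 hs₁
    have hs₂' : f (s₂ + 1) ≠ f s₂ := (hmem s₂).1 hs₂
    have := hsep s₁ hs₁' s₂ hs₂' (by
      intro h; apply hne; exact h)
    have habs : |s₁ - s₂| ≤ (k : ℤ) := by
      have : s₁ - s₂ = (t₁ : ℤ) - t₂ := by omega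
      rw [this]
      rw [abs_le]; omega
    omega
  have hinj : ∀ s : ℤ, Set.InjOn (fun t : ℕ => s - (t : ℤ)) (range k : Set ℕ) := by
    intro s t₁ _ t₂ _ h
    simp only at h
    omega
  have hsum : ∑ m ∈ W, T m = ∑ s ∈ S, ∑ t ∈ range k, T (s - t) := by
    rw [hW, Finset.sum_biUnion hdisj]
    apply Finset.sum_congr rfl
    intro s _
    rw [Finset.sum_image (fun t₁ h₁ t₂ h₂ h => hinj s h₁ h₂ h)]
  -- evaluate T on each window element
  have hval : ∀ s ∈ S, ∀ t ∈ range k, T (s - t) = ((k - 1).choose t : ℝ) * |f (s + 1) - f s| := by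
    intro s hs t ht
    rw [Finset.mem_range] at ht
    have hsS : f (s + 1) ≠ f s := (hmem s).1 hs
    -- no other jumps near s
    have hnear : ∀ x : ℤ, x ≠ s → |s - x| ≤ (k : ℤ) → f (x + 1) = f x := by
      intro x hx hax
      by_contra hne
      have := hsep s hsS x hne (by exact fun h => hx h.symm)
      omega
    have hconst1 : ∀ j : ℕ, j ≤ t → f (s - t + j) = f (s - t) := by
      apply constRun
      intro r hr
      apply hnear
      · intro h; omega
      · rw [abs_le]; omega
    have hconst2 : ∀ j : ℕ, t < j → j ≤ k → f (s - t + j) = f (s + 1) := by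
      intro j hj1 hj2
      have e : s - (t : ℤ) + j = s + 1 + ((j - t - 1 : ℕ) : ℤ) := by
        omega
      rw [e]
      exact constRun f (s + 1) (k - t - 1)
        (fun r hr => hnear (s + 1 + r) (by omega) (by rw [abs_le]; omega))
        (j - t - 1) (by omega)
    exact window_val k hk f s t ht hconst1 hconst2
  -- RHS finsum
  have hRHS : ∑ᶠ m : ℤ, |f (m + 1) - f m| = ∑ s ∈ S, |f (s + 1) - f s| := by
    apply finsum_eq_finset_sum_of_support_subset
    intro m hm
    simp only [Function.mem_support, abs_ne_zero, sub_ne_zero] at hm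
    exact (hmem m).2 hm
  -- binomial total
  have hbinom : ∑ t ∈ range k, ((k - 1).choose t : ℝ) = 2 ^ (k - 1) := by
    have := Nat.sum_range_choose (k - 1)
    rw [show k - 1 + 1 = k by omega] at this
    exact_mod_cast congrArg (fun n : ℕ => (n : ℝ)) this
  calc ∑ᶠ m : ℤ, T m = ∑ m ∈ W, T m := hLHS
    _ = ∑ s ∈ S, ∑ t ∈ range k, T (s - t) := hsum
    _ = ∑ s ∈ S, ∑ t ∈ range k, ((k - 1).choose t : ℝ) * |f (s + 1) - f s| := by
        apply Finset.sum_congr rfl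
        intro s hs
        exact Finset.sum_congr rfl (fun t ht => hval s hs t ht)
    _ = ∑ s ∈ S, 2 ^ (k - 1) * |f (s + 1) - f s| := by
        apply Finset.sum_congr rfl
        intro s _
        rw [← Finset.sum_mul, hbinom]
    _ = 2 ^ (k - 1) * ∑ s ∈ S, |f (s + 1) - f s| := by rw [Finset.mul_sum]
    _ = 2 ^ (k - 1) * ∑ᶠ m : ℤ, |f (m + 1) - f m| := by rw [hRHS]
end

section
/- For a piecewise constant signal f : ℤ → ℝ with finite jump set S where jumps are separated by more than k, the support of T_k f is exactly the union over jumps i ∈ S of the index windows { i - k + 1, …, i }, and these windows are pairwise disjoint. -/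
private lemma abel_aux (k : ℕ) (a : ℕ → ℝ) :
    ∑ j ∈ Finset.range (k + 2), (-1 : ℝ) ^ j * ((k + 1).choose j : ℝ) * a j
      = ∑ j ∈ Finset.range (k + 1), (-1 : ℝ) ^ j * (k.choose j : ℝ) * (a j - a (j + 1)) := by
  have h0 : ∑ j ∈ Finset.range (k + 1), (-1 : ℝ) ^ j * (k.choose j : ℝ) * a j
      = a 0 + ∑ j ∈ Finset.range (k + 1), (-1 : ℝ) ^ (j + 1) * (k.choose (j + 1) : ℝ) * a (j + 1) := by
    have h1 := Finset.sum_range_succ (fun j => (-1 : ℝ) ^ j * (k.choose j : ℝ) * a j) (k + 1)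
    have h2 := Finset.sum_range_succ' (fun j => (-1 : ℝ) ^ j * (k.choose j : ℝ) * a j) (k + 1)
    simp only [Nat.choose_succ_self, Nat.cast_zero, mul_zero, zero_mul, add_zero] at h1
    rw [← h1, h2]
    simp [add_comm]
  rw [Finset.sum_range_succ' (fun j => (-1 : ℝ) ^ j * ((k + 1).choose j : ℝ) * a j)]
  have h3 : ∀ j, ((k + 1).choose (j + 1) : ℝ) = (k.choose j : ℝ) + (k.choose (j + 1) : ℝ) := by
    intro j
    rw [Nat.choose_succ_succ]
    push_cast
    ring
  calc (∑ j ∈ Finset.range (k + 1), (-1 : ℝ) ^ (j + 1) * ((k + 1).choose (j + 1) : ℝ) * a (j + 1))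
        + (-1 : ℝ) ^ 0 * ((k + 1).choose 0 : ℝ) * a 0
      = a 0 + ∑ j ∈ Finset.range (k + 1),
          ((-1 : ℝ) ^ (j + 1) * (k.choose j : ℝ) * a (j + 1)
            + (-1 : ℝ) ^ (j + 1) * (k.choose (j + 1) : ℝ) * a (j + 1)) := by
        simp only [h3, pow_zero, Nat.choose_zero_right, Nat.cast_one, one_mul]
        rw [add_comm]
        congr 1
        apply Finset.sum_congr rfl
        intro j _
        ring
    _ = (a 0 + ∑ j ∈ Finset.range (k + 1), (-1 : ℝ) ^ (j + 1) * (k.choose (j + 1) : ℝ) * a (j + 1))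
        + ∑ j ∈ Finset.range (k + 1), (-1 : ℝ) ^ (j + 1) * (k.choose j : ℝ) * a (j + 1) := by
        rw [Finset.sum_add_distrib]; ring
    _ = ∑ j ∈ Finset.range (k + 1), (-1 : ℝ) ^ j * (k.choose j : ℝ) * (a j - a (j + 1)) := by
        rw [← h0, ← Finset.sum_add_distrib]
        apply Finset.sum_congr rfl
        intro j _
        ring

theorem piecewise_constant_support (k : ℕ) (hk : 0 < k) (f : ℤ → ℝ)
    (hS : {j : ℤ | f (j + 1) ≠ f j}.Finite)
    (hsep : ∀ j₁ ∈ {j : ℤ | f (j + 1) ≠ f j}, ∀ j₂ ∈ {j : ℤ | f (j + 1) ≠ f j},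
      j₁ ≠ j₂ → (k : ℤ) < |j₁ - j₂|) :
    (Function.support
        (fun m : ℤ =>
          ∑ j ∈ Finset.range (k + 1), (-1 : ℝ) ^ (j + k) * (k.choose j : ℝ) * f (m + j))
      = ⋃ i ∈ {j : ℤ | f (j + 1) ≠ f j}, Set.Ioc (i - (k : ℤ)) i) ∧
    {j : ℤ | f (j + 1) ≠ f j}.PairwiseDisjoint (fun i => Set.Ioc (i - (k : ℤ)) i) := by
  obtain ⟨n, rfl⟩ : ∃ n, k = n + 1 := ⟨k - 1, by omega⟩
  -- rewrite the operator via Abel summation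
  have key : ∀ m : ℤ,
      ∑ j ∈ Finset.range (n + 1 + 1), (-1 : ℝ) ^ (j + (n + 1)) * ((n + 1).choose j : ℝ) * f (m + j)
        = (-1 : ℝ) ^ (n + 1) *
          ∑ j ∈ Finset.range (n + 1), (-1 : ℝ) ^ j * (n.choose j : ℝ) * (f (m + j) - f (m + j + 1)) := by
    intro m
    have hc : ∀ j : ℕ, f (m + (j : ℤ) + 1) = f (m + ((j + 1 : ℕ) : ℤ)) := by
      intro j; push_cast; ring_nf
    simp only [hc]
    rw [← abel_aux n (fun j => f (m + j)), Finset.mul_sum]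
    apply Finset.sum_congr rfl
    intro j _
    rw [pow_add]
    ring
  constructor
  · ext m
    simp only [Function.mem_support, Set.mem_iUnion, Set.mem_Ioc, Set.mem_setOf_eq]
    constructor
    · intro hm
      rw [key m] at hm
      have hsum : ∑ j ∈ Finset.range (n + 1), (-1 : ℝ) ^ j * (n.choose j : ℝ) * (f (m + j) - f (m + j + 1)) ≠ 0 := by
        intro h0; rw [h0, mul_zero] at hm; exact hm rfl
      obtain ⟨j, hj, hjne⟩ := Finset.exists_ne_zero_of_sum_ne_zero hsum
      rw [Finset.mem_range] at hj
      have hd : f (m + j) ≠ f (m + j + 1) := by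
        intro h; rw [h, sub_self, mul_zero] at hjne; exact hjne rfl
      refine ⟨m + j, ?_, ?_, ?_⟩
      · exact fun h => hd h.symm
      · push_cast; omega
      · omega
    · rintro ⟨i, hi, him1, him2⟩
      rw [key m]
      have hmi : i - m ≤ (n : ℤ) := by push_cast at him1; omega
      set ℓ : ℕ := (i - m).toNat with hℓ
      have hℓi : (ℓ : ℤ) = i - m := Int.toNat_of_nonneg (by omega)
      have hℓn : ℓ ≤ n := by omega
      have hsingle : ∑ j ∈ Finset.range (n + 1), (-1 : ℝ) ^ j * (n.choose j : ℝ) * (f (m + j) - f (m + j + 1))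
          = (-1 : ℝ) ^ ℓ * (n.choose ℓ : ℝ) * (f (m + ℓ) - f (m + ℓ + 1)) := by
        apply Finset.sum_eq_single_of_mem
        · rw [Finset.mem_range]; omega
        · intro b hb hbne
          rw [Finset.mem_range] at hb
          have hnotS : f (m + b + 1) = f (m + b) := by
            by_contra hb'
            have := hsep i hi (m + b) hb' (by omega)
            rcases lt_abs.mp this with h | h <;> push_cast at h <;> omega
          rw [hnotS, sub_self, mul_zero]
      rw [hsingle]
      have hmℓ : m + (ℓ : ℤ) = i := by omega
      rw [hmℓ]
      have hfne : f i - f (i + 1) ≠ 0 := sub_ne_zero.mpr (fun h => hi h.symm)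
      have hch : (0 : ℝ) < (n.choose ℓ : ℝ) := by
        exact_mod_cast Nat.choose_pos hℓn
      intro h0
      have := mul_ne_zero (mul_ne_zero (pow_ne_zero (n + 1) (by norm_num : (-1 : ℝ) ≠ 0))
        (mul_ne_zero (pow_ne_zero ℓ (by norm_num : (-1 : ℝ) ≠ 0)) (ne_of_gt hch))) hfne
      rw [mul_assoc] at this
      exact this (by linear_combination h0)
  · intro i₁ h₁ i₂ h₂ hne
    have hsep' := hsep i₁ h₁ i₂ h₂ hne
    rw [Function.onFun, Set.disjoint_left]
    intro x hx1 hx2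
    rw [Set.mem_Ioc] at hx1 hx2
    rcases lt_abs.mp hsep' with h | h <;> push_cast at h <;> omega
end
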